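/- arXiv:1505.06245 — 3 statements merged into one kernel-verified Lean document; each statement's English description precedes it below -/
import Mathlib

section
/- If f and g are α-differentiable at x > 0 and g(x) ≠ 0, then f/g is α-differentiable at x and T_α(f/g)(x) = (g(x)·T_α f(x) − f(x)·T_α g(x))/g(x)². -/
open Filter Topology Real

/-- `f` has conformable fractional derivative `L` of order `α` at `x`:
`T_α f(x) = lim_{ε→0} (f(x + ε·x^(1−α)) − f(x))/ε`. -/
def HasConfDerivAt (α : ℝ) (f : ℝ → ℝ) (L x : ℝ) : Prop :=
  Tendsto (fun ε : ℝ => (f (x + ε * x ^ (1 - α)) - f x) / ε) (𝓝[≠] 0) (𝓝 L)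

theorem conf_deriv_div (α x F G : ℝ) (f g : ℝ → ℝ) (hα : 0 < α) (hα1 : α ≤ 1)
    (hx : 0 < x) (hgx : g x ≠ 0)
    (hf : HasConfDerivAt α f F x) (hg : HasConfDerivAt α g G x) :
    HasConfDerivAt α (fun t => f t / g t) ((g x * F - f x * G) / (g x) ^ 2) x := by
  set y : ℝ → ℝ := fun ε => x + ε * x ^ (1 - α) with hy
  have hεne : ∀ᶠ ε in 𝓝[≠] (0:ℝ), ε ≠ 0 := eventually_mem_nhdsWithin
  have hε0 : Tendsto (fun ε : ℝ => ε) (𝓝[≠] (0:ℝ)) (𝓝 0) :=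
    tendsto_id.mono_left nhdsWithin_le_nhds
  have gtend : Tendsto (fun ε => g (y ε)) (𝓝[≠] (0:ℝ)) (𝓝 (g x)) := by
    have h1 : Tendsto (fun ε => (g (y ε) - g x) / ε * ε + g x) (𝓝[≠] (0:ℝ))
        (𝓝 (G * 0 + g x)) := (hg.mul hε0).add_const (g x)
    rw [mul_zero, zero_add] at h1
    refine h1.congr' ?_
    filter_upwards [hεne] with ε hε
    field_simp
    ring
  have hgne : ∀ᶠ ε in 𝓝[≠] (0:ℝ), g (y ε) ≠ 0 :=
    gtend.eventually_ne hgx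
  have key : Tendsto (fun ε => ((f (y ε) - f x) / ε * g x - f x * ((g (y ε) - g x) / ε))
      / (g (y ε) * g x)) (𝓝[≠] (0:ℝ)) (𝓝 ((F * g x - f x * G) / (g x * g x))) :=
    ((hf.mul_const (g x)).sub ((tendsto_const_nhds.mul hg))).div
      (gtend.mul tendsto_const_nhds) (mul_ne_zero hgx hgx)
  have heq : (F * g x - f x * G) / (g x * g x) = (g x * F - f x * G) / (g x) ^ 2 := by
    ring
  rw [heq] at key
  refine key.congr' ?_
  filter_upwards [hεne, hgne] with ε hε hgε
  change _ = (f (y ε) / g (y ε) - f x / g x) / ε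
  field_simp
  ring
end

section
/- Let α ∈ (0,1], p₀, q₀ ∈ ℝ, and s ∈ ℝ. The function y(x) = (x − x₀)^(sα) satisfies the Euler-type conformable equation (x − x₀)^(2α)·T_α^{x₀}T_α^{x₀}y + p₀·(x − x₀)^α·T_α^{x₀}y + q₀·y = 0 for all x > x₀ if and only if s satisfies the indicial equation α²·s(s−1) + α·s·p₀ + q₀ = 0. -/
open Filter Topology Real

/-- Left conformable fractional derivative of order `α` based at `x₀`:
`(T_α^{x₀} f)(x) = lim_{ε→0} (f(x + ε(x−x₀)^(1−α)) − f(x))/ε`. -/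
def HasConfDerivAtBase (x₀ α : ℝ) (f : ℝ → ℝ) (L x : ℝ) : Prop :=
  Tendsto (fun ε : ℝ => (f (x + ε * (x - x₀) ^ (1 - α)) - f x) / ε) (𝓝[≠] 0) (𝓝 L)

lemma confDeriv_rpow (x₀ α β x : ℝ) (hx : x₀ < x) :
    HasConfDerivAtBase x₀ α (fun t => (t - x₀) ^ β) (β * (x - x₀) ^ (β - α)) x := by
  have hx' : 0 < x - x₀ := by linarith
  set c := (x - x₀) ^ (1 - α) with hc
  have hf : HasDerivAt (fun t : ℝ => (t - x₀) ^ β) (β * (x - x₀) ^ (β - 1)) x := by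
    have h1 : HasDerivAt (fun t : ℝ => t - x₀) 1 x := (hasDerivAt_id x).sub_const x₀
    have h2 := (Real.hasDerivAt_rpow_const (x := x - x₀) (p := β) (Or.inl hx'.ne')).comp x h1
    simpa [Function.comp_def] using h2
  have hlin : HasDerivAt (fun ε : ℝ => x + ε * c) c 0 := by
    simpa using ((hasDerivAt_id (0:ℝ)).mul_const c).const_add x
  have hg : HasDerivAt (fun ε : ℝ => ((x + ε * c) - x₀) ^ β) (β * (x - x₀) ^ (β - 1) * c) 0 := by
    have hf' : HasDerivAt (fun t : ℝ => (t - x₀) ^ β) (β * (x - x₀) ^ (β - 1))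
        ((fun ε : ℝ => x + ε * c) 0) := by simpa using hf
    simpa [Function.comp_def] using hf'.comp 0 hlin
  have := hasDerivAt_iff_tendsto_slope.mp hg
  have key : Tendsto (fun ε : ℝ => (((x + ε * c) - x₀) ^ β - (x - x₀) ^ β) / ε) (𝓝[≠] 0)
      (𝓝 (β * (x - x₀) ^ (β - 1) * c)) := by
    refine this.congr fun ε => ?_
    simp [slope_def_field]
  have hval : β * (x - x₀) ^ (β - 1) * c = β * (x - x₀) ^ (β - α) := by
    rw [hc, mul_assoc, ← Real.rpow_add hx']
    ring_nf
  unfold HasConfDerivAtBase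
  rw [← hval]
  exact key

theorem euler_conf_equation_iff_indicial (x₀ α s p₀ q₀ : ℝ) (hα : 0 < α) (hα1 : α ≤ 1)
    (Ty TTy : ℝ → ℝ)
    (hTy : ∀ x, x₀ < x →
      HasConfDerivAtBase x₀ α (fun t => (t - x₀) ^ (s * α)) (Ty x) x)
    (hTTy : ∀ x, x₀ < x → HasConfDerivAtBase x₀ α Ty (TTy x) x) :
    (∀ x, x₀ < x →
        (x - x₀) ^ (2 * α) * TTy x + p₀ * (x - x₀) ^ α * Ty x
          + q₀ * (x - x₀) ^ (s * α) = 0) ↔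
      α ^ 2 * s * (s - 1) + α * s * p₀ + q₀ = 0 := by
  -- identify Ty
  have hTyval : ∀ x, x₀ < x → Ty x = s * α * (x - x₀) ^ (s * α - α) := by
    intro x hx
    exact tendsto_nhds_unique (hTy x hx) (confDeriv_rpow x₀ α (s*α) x hx)
  -- identify TTy
  have hTTyval : ∀ x, x₀ < x → TTy x = s * α * (s * α - α) * (x - x₀) ^ (s * α - α - α) := by
    intro x hx
    have hx' : 0 < x - x₀ := by linarith
    have hconf := confDeriv_rpow x₀ α (s*α - α) x hx
    have hconf' : HasConfDerivAtBase x₀ α (fun t => s * α * (t - x₀) ^ (s*α - α))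
        (s * α * ((s*α - α) * (x - x₀) ^ (s*α - α - α))) x := by
      unfold HasConfDerivAtBase at hconf ⊢
      have := hconf.const_mul (s*α)
      refine this.congr fun ε => ?_
      ring
    -- Ty agrees with the explicit function near the relevant points
    have heq : HasConfDerivAtBase x₀ α Ty
        (s * α * ((s*α - α) * (x - x₀) ^ (s*α - α - α))) x := by
      unfold HasConfDerivAtBase at hconf' ⊢
      refine hconf'.congr' ?_
      have hc : (0:ℝ) < (x - x₀) ^ (1 - α) := Real.rpow_pos_of_pos hx' _
      have hev : ∀ᶠ ε in 𝓝 (0:ℝ), x₀ < x + ε * (x - x₀) ^ (1 - α) := by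
        have hct : ContinuousAt (fun ε : ℝ => x + ε * (x - x₀) ^ (1 - α)) 0 := by fun_prop
        have h0 : x₀ < (fun ε : ℝ => x + ε * (x - x₀) ^ (1 - α)) 0 := by simpa using hx
        exact hct.eventually (eventually_gt_nhds h0)
      filter_upwards [nhdsWithin_le_nhds hev] with ε hε
      rw [hTyval _ hε, hTyval _ hx]
    have := tendsto_nhds_unique (hTTy x hx) heq
    rw [this]; ring
  constructor
  · intro h
    have h1 := h (x₀ + 1) (by linarith)
    simp only [add_sub_cancel_left, Real.one_rpow] at h1
    rw [hTyval _ (by linarith : x₀ < x₀ + 1), hTTyval _ (by linarith : x₀ < x₀ + 1)] at h1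
    simp only [add_sub_cancel_left, Real.one_rpow] at h1
    nlinarith [h1]
  · intro h x hx
    have hx' : 0 < x - x₀ := by linarith
    rw [hTyval _ hx, hTTyval _ hx]
    have e1 : (x - x₀) ^ (2*α) * (x - x₀) ^ (s*α - α - α) = (x - x₀) ^ (s*α) := by
      rw [← Real.rpow_add hx']; ring_nf
    have e2 : (x - x₀) ^ α * (x - x₀) ^ (s*α - α) = (x - x₀) ^ (s*α) := by
      rw [← Real.rpow_add hx']; ring_nf
    have : (x - x₀) ^ (2*α) * (s * α * (s*α - α) * (x - x₀) ^ (s*α - α - α))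
        + p₀ * (x - x₀) ^ α * (s * α * (x - x₀) ^ (s*α - α)) + q₀ * (x - x₀) ^ (s*α)
        = (x - x₀) ^ (s*α) * (α ^ 2 * s * (s - 1) + α * s * p₀ + q₀) := by
      rw [show (x - x₀) ^ (2*α) * (s * α * (s*α - α) * (x - x₀) ^ (s*α - α - α))
          = s * α * (s*α - α) * ((x - x₀) ^ (2*α) * (x - x₀) ^ (s*α - α - α)) by ring,
        show p₀ * (x - x₀) ^ α * (s * α * (x - x₀) ^ (s*α - α))
          = p₀ * s * α * ((x - x₀) ^ α * (x - x₀) ^ (s*α - α)) by ring, e1, e2]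
      ring
    rw [this, h, mul_zero]
end

section
/- Let α ∈ (0,1] and let y be given on (x₀, ∞) by the convergent fractional power series y(x) = ∑_{k≥0} c_k·(x − x₀)^((k+s)α) with radius of convergence ρ^α (in the variable u = (x−x₀)^α). Then for x ∈ (x₀, x₀+ρ), y is α-differentiable based at x₀ term by term: T_α^{x₀}y(x) = ∑_{k≥0} c_k·α·(k+s)·(x − x₀)^((k+s−1)α). -/
open Filter Topology Real

lemma slope_aux {f : ℝ → ℝ} {L x h : ℝ} (hf : HasDerivAt f L x) (hh : h ≠ 0) :
    Tendsto (fun ε : ℝ => (f (x + ε * h) - f x) / ε) (𝓝[≠] 0) (𝓝 (L * h)) := by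
  rw [hasDerivAt_iff_tendsto_slope] at hf
  have hmap : Tendsto (fun ε : ℝ => x + ε * h) (𝓝[≠] (0:ℝ)) (𝓝[≠] x) := by
    rw [tendsto_nhdsWithin_iff]
    constructor
    · have h1 : Tendsto (fun ε : ℝ => x + ε * h) (𝓝 0) (𝓝 (x + 0 * h)) :=
        (tendsto_id.mul_const h).const_add x
      simpa using h1.mono_left nhdsWithin_le_nhds
    · filter_upwards [self_mem_nhdsWithin] with ε hε
      simp only [Set.mem_compl_iff, Set.mem_singleton_iff] at hε ⊢
      intro hc
      apply hε
      have : ε * h = 0 := by linarith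
      rcases mul_eq_zero.1 this with h1 | h1
      · exact h1
      · exact absurd h1 hh
  have H := (hf.comp hmap).mul_const h
  apply H.congr'
  filter_upwards [self_mem_nhdsWithin] with ε hε
  simp only [Set.mem_compl_iff, Set.mem_singleton_iff] at hε
  simp only [Function.comp, slope_def_field]
  field_simp
  ring

theorem conf_deriv_term_by_term (x₀ α s ρ : ℝ) (c : ℕ → ℝ) (y : ℝ → ℝ)
    (hα : 0 < α) (hα1 : α ≤ 1) (hρ : 0 < ρ)
    (hrad : ∀ u : ℝ, |u| < ρ ^ α → Summable (fun k : ℕ => c k * u ^ k))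
    (hy : ∀ x ∈ Set.Ioo x₀ (x₀ + ρ),
      y x = ∑' k : ℕ, c k * (x - x₀) ^ (((k : ℝ) + s) * α)) :
    ∀ x ∈ Set.Ioo x₀ (x₀ + ρ),
      HasConfDerivAtBase x₀ α y
        (∑' k : ℕ, c k * α * ((k : ℝ) + s) * (x - x₀) ^ (((k : ℝ) + s - 1) * α)) x := by
  intro x hx
  obtain ⟨hx1, hx2⟩ := hx
  set t := x - x₀ with ht_def
  have ht : 0 < t := sub_pos.2 hx1
  have htρ : t < ρ := by rw [ht_def]; linarith
  set u := t ^ α with hu_def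
  have hu0 : 0 < u := rpow_pos_of_pos ht α
  have huρ : u < ρ ^ α := rpow_lt_rpow ht.le htρ hα
  obtain ⟨r, hur, hrρ⟩ := exists_between huρ
  obtain ⟨t', hrt', ht'ρ⟩ := exists_between hrρ
  have hr0 : 0 < r := hu0.trans hur
  have ht'0 : 0 < t' := hr0.trans hrt'
  -- coefficient bound
  have hsum' : Summable (fun k : ℕ => c k * t' ^ k) :=
    hrad t' (by rw [abs_of_pos ht'0]; exact ht'ρ)
  have htend : Tendsto (fun k : ℕ => |c k * t' ^ k|) atTop (𝓝 0) := by
    simpa using hsum'.tendsto_atTop_zero.abs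
  obtain ⟨C, hC⟩ := htend.bddAbove_range
  have hCb : ∀ k : ℕ, |c k| * t' ^ k ≤ C := by
    intro k
    have := hC (Set.mem_range_self k)
    rwa [abs_mul, abs_pow, abs_of_pos ht'0] at this
  have hC0 : 0 ≤ C := le_trans (by positivity) (hCb 0)
  -- summable bound for derivatives
  set U : ℕ → ℝ := fun n => C / r * (n * (r / t') ^ n) with hU_def
  have hq : ‖r / t'‖ < 1 := by
    rw [Real.norm_eq_abs, abs_of_pos (by positivity), div_lt_one ht'0]
    exact hrt'
  have hUsum : Summable U := by
    have := (summable_pow_mul_geometric_of_norm_lt_one (R := ℝ) 1 hq).mul_left (C / r)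
    simpa [hU_def, pow_one] using this
  have hUeq : ∀ n : ℕ, C / t' ^ n * (n * r ^ (n - 1)) = U n := by
    intro n
    cases n with
    | zero => simp [hU_def]
    | succ m =>
      simp only [hU_def, Nat.add_sub_cancel, div_pow]
      field_simp
      ring
  -- derivative of the power series
  have hg : ∀ (n : ℕ) (v : ℝ), v ∈ Metric.ball (0:ℝ) r →
      HasDerivAt (fun w => c n * w ^ n) (c n * (↑n * v ^ (n - 1))) v :=
    fun n v _ => (hasDerivAt_pow n v).const_mul (c n)
  have hg' : ∀ (n : ℕ) (v : ℝ), v ∈ Metric.ball (0:ℝ) r →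
      ‖c n * (↑n * v ^ (n - 1))‖ ≤ U n := by
    intro n v hv
    rw [Metric.mem_ball, dist_zero_right, Real.norm_eq_abs] at hv
    have hcn : |c n| ≤ C / t' ^ n := (le_div_iff₀ (by positivity)).2 (hCb n)
    have hvpow : |v| ^ (n - 1) ≤ r ^ (n - 1) :=
      pow_le_pow_left₀ (abs_nonneg v) hv.le _
    calc ‖c n * (↑n * v ^ (n - 1))‖ = |c n| * (↑n * |v| ^ (n - 1)) := by
          rw [Real.norm_eq_abs, abs_mul, abs_mul, abs_pow, Nat.abs_cast]
      _ ≤ C / t' ^ n * (↑n * r ^ (n - 1)) := by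
          apply mul_le_mul hcn _ (by positivity) (by positivity)
          exact mul_le_mul_of_nonneg_left hvpow (Nat.cast_nonneg n)
      _ = U n := hUeq n
  have hg0 : Summable (fun n : ℕ => c n * (0:ℝ) ^ n) :=
    hrad 0 (by simpa using rpow_pos_of_pos hρ α)
  have humem : u ∈ Metric.ball (0:ℝ) r := by
    rw [Metric.mem_ball, dist_zero_right, Real.norm_eq_abs, abs_of_pos hu0]
    exact hur
  have hgderiv : HasDerivAt (fun v => ∑' n : ℕ, c n * v ^ n)
      (∑' n : ℕ, c n * (↑n * u ^ (n - 1))) u :=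
    hasDerivAt_tsum_of_isPreconnected hUsum Metric.isOpen_ball
      (convex_ball 0 r).isPreconnected hg hg' (Metric.mem_ball_self hr0) hg0 humem
  set G : ℝ → ℝ := fun v => ∑' n : ℕ, c n * v ^ n with hG_def
  set G' : ℝ := ∑' n : ℕ, c n * (↑n * u ^ (n - 1)) with hG'_def
  -- derivative of F
  have hA : HasDerivAt (fun x' => (x' - x₀) ^ (s * α)) (s * α * t ^ (s * α - 1)) x := by
    have := ((hasDerivAt_id x).sub_const x₀).rpow_const (p := s * α) (Or.inl ht.ne')
    simpa [ht_def] using this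
  have hB : HasDerivAt (fun x' => (x' - x₀) ^ α) (α * t ^ (α - 1)) x := by
    have := ((hasDerivAt_id x).sub_const x₀).rpow_const (p := α) (Or.inl ht.ne')
    simpa [ht_def] using this
  have hcomp : HasDerivAt (fun x' => G ((x' - x₀) ^ α)) (G' * (α * t ^ (α - 1))) x :=
    by have := HasDerivAt.comp x hgderiv hB; exact this
  have hF : HasDerivAt (fun x' => (x' - x₀) ^ (s * α) * G ((x' - x₀) ^ α))
      (s * α * t ^ (s * α - 1) * G u + t ^ (s * α) * (G' * (α * t ^ (α - 1)))) x :=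
    hA.mul hcomp
  -- y equals F near x
  have hev : y =ᶠ[𝓝 x] fun x' => (x' - x₀) ^ (s * α) * G ((x' - x₀) ^ α) := by
    filter_upwards [Ioo_mem_nhds hx1 hx2] with z hz
    rw [hy z hz]
    have hz0 : (0:ℝ) < z - x₀ := sub_pos.2 hz.1
    have hterm : ∀ k : ℕ, c k * (z - x₀) ^ (((k : ℝ) + s) * α) =
        (z - x₀) ^ (s * α) * (c k * ((z - x₀) ^ α) ^ k) := by
      intro k
      have hk : (z - x₀) ^ (α * (k : ℝ)) = ((z - x₀) ^ α) ^ k := by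
        rw [Real.rpow_mul hz0.le, Real.rpow_natCast]
      rw [show ((k : ℝ) + s) * α = s * α + α * (k : ℝ) by ring, Real.rpow_add hz0, hk]
      ring
    rw [tsum_congr hterm, tsum_mul_left]
  have hyderiv : HasDerivAt y
      (s * α * t ^ (s * α - 1) * G u + t ^ (s * α) * (G' * (α * t ^ (α - 1)))) x :=
    hF.congr_of_eventuallyEq hev
  -- conformable derivative
  have hh : t ^ (1 - α) ≠ 0 := (rpow_pos_of_pos ht _).ne'
  have hmain := slope_aux hyderiv hh
  -- summabilities for splitting
  have hSu : Summable (fun k : ℕ => c k * u ^ k) :=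
    hrad u (by rw [abs_of_pos hu0]; exact huρ)
  have hSG' : Summable (fun n : ℕ => c n * (↑n * u ^ (n - 1))) :=
    Summable.of_norm_bounded hUsum (fun n => hg' n u humem)
  have hS1 : Summable (fun k : ℕ => c k * ↑k * u ^ k) := by
    apply (hSG'.mul_right u).congr
    intro n
    cases n with
    | zero => simp
    | succ m =>
      simp only [Nat.add_sub_cancel]
      ring
  have huG' : ∑' k : ℕ, c k * ↑k * u ^ k = u * G' := by
    rw [hG'_def, ← tsum_mul_left]
    apply tsum_congr
    intro n
    cases n with
    | zero => simp
    | succ m =>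
      simp only [Nat.add_sub_cancel]
      ring
  -- identify the limit
  have hRHS : (∑' k : ℕ, c k * α * ((k : ℝ) + s) * t ^ (((k : ℝ) + s - 1) * α)) =
      α * t ^ ((s - 1) * α) * (u * G' + s * G u) := by
    have hterm : ∀ k : ℕ, c k * α * ((k : ℝ) + s) * t ^ (((k : ℝ) + s - 1) * α) =
        α * t ^ ((s - 1) * α) * (c k * ↑k * u ^ k + s * (c k * u ^ k)) := by
      intro k
      have hk : t ^ (α * (k : ℝ)) = u ^ k := by
        rw [hu_def, ← Real.rpow_natCast (t ^ α) k, ← Real.rpow_mul ht.le]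
      rw [show ((k : ℝ) + s - 1) * α = (s - 1) * α + α * (k : ℝ) by ring,
        Real.rpow_add ht, hk]
      ring
    rw [tsum_congr hterm, tsum_mul_left, Summable.tsum_add hS1 (hSu.mul_left s), huG',
      tsum_mul_left, hG_def]
  rw [HasConfDerivAtBase, hRHS]
  have e1 : t ^ (s * α - 1) * t ^ (1 - α) = t ^ ((s - 1) * α) := by
    rw [← Real.rpow_add ht]; ring_nf
  have e2 : t ^ (α - 1) * t ^ (1 - α) = 1 := by
    rw [← Real.rpow_add ht]; norm_num
  have e3 : u * t ^ ((s - 1) * α) = t ^ (s * α) := by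
    rw [hu_def, ← Real.rpow_add ht]; ring_nf
  have halg : (s * α * t ^ (s * α - 1) * G u + t ^ (s * α) * (G' * (α * t ^ (α - 1))))
      * t ^ (1 - α) = α * t ^ ((s - 1) * α) * (u * G' + s * G u) := by
    linear_combination (s * α * G u) * e1 + (α * t ^ (s * α) * G') * e2
      - (α * G' : ℝ) * e3
  rw [← halg]
  exact hmain
end
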